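/- Let ζ be a primitive n-th root of unity and let A be a nonzero complex number. Then there is at most one pair (a, b) with a, b ∈ {1, ..., n-1}, a ≠ b, such that A = (1 - ζ^a)/(1 - ζ^b). -/

import Mathlib

/-- For `ζ` a primitive `n`-th root of unity and `A ≠ 0`, there is at most one
pair `(a, b)` with `a, b ∈ {1, …, n-1}`, `a ≠ b`, and `A = (1 - ζ^a)/(1 - ζ^b)`. -/
theorem at_most_one_root_pair {n : ℕ} (ζ : ℂ) (hζ : IsPrimitiveRoot ζ n)
    (A : ℂ) (hA : A ≠ 0) (a b a' b' : ℕ)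
    (ha : 1 ≤ a) (ha' : a ≤ n - 1) (hb : 1 ≤ b) (hb' : b ≤ n - 1)
    (ha1 : 1 ≤ a') (ha1' : a' ≤ n - 1) (hb1 : 1 ≤ b') (hb1' : b' ≤ n - 1)
    (hab : a ≠ b) (hab' : a' ≠ b')
    (h : A = (1 - ζ ^ a) / (1 - ζ ^ b)) (h' : A = (1 - ζ ^ a') / (1 - ζ ^ b')) :
    a = a' ∧ b = b' := by
  have hn : 2 ≤ n := by omega
  set K := starRingEnd ℂ with hK
  have hne : ∀ k : ℕ, 1 ≤ k → k ≤ n - 1 → ζ ^ k ≠ 1 := fun k hk hk' =>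
    hζ.pow_ne_one_of_pos_of_lt (by omega) (by omega)
  have hζ1 : ‖ζ‖ = 1 := by
    have := hζ.norm'_eq_one (by omega)
    simpa using this
  have hconj : ∀ k : ℕ, ζ ^ k * K (ζ ^ k) = 1 := by
    intro k
    rw [hK, Complex.mul_conj]
    norm_cast
    simp [Complex.normSq_eq_norm_sq, map_pow, hζ1]
  have hu0 : (1 : ℂ) - ζ ^ b ≠ 0 := sub_ne_zero.mpr (Ne.symm (hne b hb hb'))
  have hu0' : (1 : ℂ) - ζ ^ b' ≠ 0 := sub_ne_zero.mpr (Ne.symm (hne b' hb1 hb1'))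
  rw [eq_div_iff hu0] at h
  rw [eq_div_iff hu0'] at h'
  -- h : A * (1 - ζ ^ b) = 1 - ζ ^ a, h' similarly
  have hA1 : A ≠ 1 := by
    intro h1
    rw [h1, one_mul] at h
    have heq : ζ ^ a = ζ ^ b := by linear_combination h
    exact hab (hζ.pow_inj (by omega) (by omega) heq)
  -- circle equations transported
  have hB : (A * K A - A) * (1 - ζ ^ b) + (A * K A - K A) * (1 - K (ζ ^ b)) = 0 := by
    have e1 := hconj a
    have e2 := hconj b
    have hv' : (ζ : ℂ) ^ a = 1 - A * (1 - ζ ^ b) := by linear_combination h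
    rw [hv'] at e1
    simp only [map_sub, map_mul, map_one] at e1
    linear_combination e1 - A * K A * e2
  have hB' : (A * K A - A) * (1 - ζ ^ b') + (A * K A - K A) * (1 - K (ζ ^ b')) = 0 := by
    have e1 := hconj a'
    have e2 := hconj b'
    have hv' : (ζ : ℂ) ^ a' = 1 - A * (1 - ζ ^ b') := by linear_combination h'
    rw [hv'] at e1
    simp only [map_sub, map_mul, map_one] at e1
    linear_combination e1 - A * K A * e2
  have hCne : A * K A - K A ≠ 0 := by
    have hKA0 : K A ≠ 0 := by
      intro hc
      apply hA
      have := congrArg K hc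
      simpa [hK] using this
    have hA1' : A - 1 ≠ 0 := sub_ne_zero.mpr hA1
    have : A * K A - K A = K A * (A - 1) := by ring
    rw [this]
    exact mul_ne_zero hKA0 hA1'
  have hcr : (1 - ζ ^ b') * (1 - K (ζ ^ b)) = (1 - ζ ^ b) * (1 - K (ζ ^ b')) := by
    have h0 : (A * K A - K A) *
        ((1 - ζ ^ b') * (1 - K (ζ ^ b)) - (1 - ζ ^ b) * (1 - K (ζ ^ b'))) = 0 := by
      linear_combination (1 - ζ ^ b') * hB - (1 - ζ ^ b) * hB'
    rcases mul_eq_zero.mp h0 with h1 | h1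
    · exact absurd h1 hCne
    · exact sub_eq_zero.mp h1
  have hfin : (ζ ^ b - 1) * (ζ ^ b' - 1) * (ζ ^ b - ζ ^ b') = 0 := by
    linear_combination (ζ ^ b * ζ ^ b') * hcr + ζ ^ b' * (1 - ζ ^ b') * hconj b
      - ζ ^ b * (1 - ζ ^ b) * hconj b'
  have hbb : ζ ^ b = ζ ^ b' := by
    rcases mul_eq_zero.mp hfin with h1 | h1
    · rcases mul_eq_zero.mp h1 with h2 | h2
      · exact absurd (sub_eq_zero.mp h2) (hne b hb hb')
      · exact absurd (sub_eq_zero.mp h2) (hne b' hb1 hb1')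
    · exact sub_eq_zero.mp h1
  have hbeq : b = b' := hζ.pow_inj (by omega) (by omega) hbb
  have haa : ζ ^ a = ζ ^ a' := by
    have : A * (1 - ζ ^ b) = A * (1 - ζ ^ b') := by rw [hbb]
    linear_combination h - h' - this
  exact ⟨hζ.pow_inj (by omega) (by omega) haa, hbeq⟩
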